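/- Let G be a finite connected simple graph. Then the relation on the set of non-separating edges of G defined by 'e ∼ f if and only if e = f or e and f are coparallel' is an equivalence relation. In particular it is transitive: if e, f, h are non-separating edges of G with e ≠ h such that deleting {e, f} disconnects G and deleting {f, h} disconnects G, then deleting {e, h} disconnects G. -/

import Mathlib

open SimpleGraph

section Aux

variable {V : Type*} {G : SimpleGraph V}

private lemma reachable_del {u v : V}
    (huv : (G.deleteEdges {s(u, v)}).Reachable u v) {x y : V} (p : G.Walk x y) :
    (G.deleteEdges {s(u, v)}).Reachable x y := by
  induction p with
  | nil => exact Reachable.refl _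
  | @cons a b c h p ih =>
    refine Reachable.trans ?_ ih
    by_cases hab : s(a, b) = s(u, v)
    · rw [Sym2.eq_iff] at hab
      rcases hab with ⟨rfl, rfl⟩ | ⟨rfl, rfl⟩
      · exact huv
      · exact huv.symm
    · exact Adj.reachable (by simp [h, hab])

/-- A non-bridge edge can be deleted keeping connectivity, and conversely. -/
private lemma connected_deleteEdges_iff_not_isBridge (hG : G.Connected) {e : Sym2 V}
    (he : e ∈ G.edgeSet) :
    (G.deleteEdges {e}).Connected ↔ ¬ G.IsBridge e := by
  induction e using Sym2.ind with
  | _ u v =>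
    rw [isBridge_iff]
    have hadj : G.Adj u v := he
    simp only [hadj, true_and, not_not]
    constructor
    · intro hc
      exact hc.preconnected u v
    · intro hr
      have : Nonempty V := hG.nonempty
      refine ⟨fun x y => ?_⟩
      obtain ⟨p⟩ := hG.preconnected x y
      exact reachable_del hr p

/-- Main characterization: assuming `G` and `G - e` connected, `G - {e,f}` is
disconnected iff every cycle containing `f` contains `e`. -/
private lemma disconnected_pair_iff (hG : G.Connected) {e f : Sym2 V}
    (he : e ∈ G.edgeSet) (hf : f ∈ G.edgeSet) (hef : e ≠ f)
    (he' : (G.deleteEdges {e}).Connected) :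
    ¬ (G.deleteEdges {e, f}).Connected ↔
      ∀ ⦃u : V⦄ (p : G.Walk u u), p.IsCycle → f ∈ p.edges → e ∈ p.edges := by
  have hpair : G.deleteEdges {e, f} = (G.deleteEdges {e}).deleteEdges {f} := by
    rw [deleteEdges_deleteEdges, Set.singleton_union]
  have hf' : f ∈ (G.deleteEdges {e}).edgeSet := by
    rw [edgeSet_deleteEdges]; exact ⟨hf, by simpa using (Ne.symm hef)⟩
  rw [hpair, connected_deleteEdges_iff_not_isBridge he' hf', not_not,
    isBridge_iff_forall_cycle_notMem hf']
  constructor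
  · intro H u p hp hfp
    by_contra hep
    have hsub : ∀ x ∈ p.edges, x ∈ (G.deleteEdges {e}).edgeSet := by
      intro x hx
      rw [edgeSet_deleteEdges]
      refine ⟨p.edges_subset_edgeSet hx, ?_⟩
      simp only [Set.mem_singleton_iff]
      rintro rfl
      exact hep hx
    exact H (p.transfer _ hsub) (hp.transfer hsub) (by rwa [Walk.edges_transfer])
  · intro H u p hp hfp
    have hsub : ∀ x ∈ p.edges, x ∈ G.edgeSet := by
      intro x hx
      have := p.edges_subset_edgeSet hx
      rw [edgeSet_deleteEdges] at this
      exact this.1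
    have hq := H (p.transfer G hsub) (hp.transfer hsub)
    rw [Walk.edges_transfer] at hq
    have := hq hfp
    have hmem := p.edges_subset_edgeSet this
    rw [edgeSet_deleteEdges] at hmem
    exact hmem.2 rfl

private lemma ne_of_pair_disconnected {e f : Sym2 V}
    (he' : (G.deleteEdges {e}).Connected)
    (hd : ¬ (G.deleteEdges {e, f}).Connected) : e ≠ f := by
  rintro rfl
  simp only [Set.pair_eq_singleton] at hd
  exact hd he'

/-- Transitivity of the coparallel relation. -/
private lemma coparallel_trans (hG : G.Connected) {e f h : Sym2 V}
    (he : e ∈ G.edgeSet) (hf : f ∈ G.edgeSet) (hh : h ∈ G.edgeSet)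
    (he' : (G.deleteEdges {e}).Connected) (hf' : (G.deleteEdges {f}).Connected)
    (hh' : (G.deleteEdges {h}).Connected) (heh : e ≠ h)
    (hef : ¬ (G.deleteEdges {e, f}).Connected)
    (hfh : ¬ (G.deleteEdges {f, h}).Connected) :
    ¬ (G.deleteEdges {e, h}).Connected := by
  have hef' : e ≠ f := ne_of_pair_disconnected he' hef
  have hfh' : f ≠ h := ne_of_pair_disconnected hf' hfh
  have Pef := (disconnected_pair_iff hG he hf hef' he').mp hef
  have Pfh := (disconnected_pair_iff hG hf hh hfh' hf').mp hfh
  rw [disconnected_pair_iff hG he hh heh he']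
  intro u p hp hhp
  exact Pef p hp (Pfh p hp hhp)

end Aux

/-- For a finite connected simple graph `G`, the relation on the non-separating edges
of `G` given by "`e ∼ f` iff `e = f` or `e` and `f` are coparallel" (i.e. `e ≠ f`,
neither is a bridge, and deleting both disconnects `G`) is an equivalence relation.
In particular it is transitive: if `e, f, h` are non-separating edges with `e ≠ h`
such that deleting `{e, f}` disconnects `G` and deleting `{f, h}` disconnects `G`,
then deleting `{e, h}` disconnects `G`. -/
theorem coparallel_equivalence
    {V : Type*} [Fintype V] (G : SimpleGraph V) (hG : G.Connected) :
    Equivalence (fun e f : {e : Sym2 V // e ∈ G.edgeSet ∧ (G.deleteEdges {e}).Connected} =>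
        e = f ∨ (e.1 ≠ f.1 ∧ ¬ (G.deleteEdges {e.1, f.1}).Connected)) ∧
      ∀ e f h : Sym2 V, e ∈ G.edgeSet → f ∈ G.edgeSet → h ∈ G.edgeSet →
        (G.deleteEdges {e}).Connected → (G.deleteEdges {f}).Connected →
        (G.deleteEdges {h}).Connected → e ≠ h →
        ¬ (G.deleteEdges {e, f}).Connected → ¬ (G.deleteEdges {f, h}).Connected →
        ¬ (G.deleteEdges {e, h}).Connected := by
  constructor
  · constructor
    · intro e; exact Or.inl rfl
    · rintro e f (rfl | ⟨hne, hd⟩)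
      · exact Or.inl rfl
      · exact Or.inr ⟨hne.symm, by rwa [Set.pair_comm]⟩
    · rintro e f h (rfl | ⟨hef, hdef⟩) hfh
      · exact hfh
      · rcases hfh with rfl | ⟨hfh, hdfh⟩
        · exact Or.inr ⟨hef, hdef⟩
        · by_cases heh : e.1 = h.1
          · exact Or.inl (Subtype.ext heh)
          · exact Or.inr ⟨heh, coparallel_trans hG e.2.1 f.2.1 h.2.1
              e.2.2 f.2.2 h.2.2 heh hdef hdfh⟩
  · intro e f h he hf hh he' hf' hh' heh hef hfh
    exact coparallel_trans hG he hf hh he' hf' hh' heh hef hfh
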